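/- Negativity of the t-derivative of the baseline proxy FDP at its root (point-mass prior): Fix q ∈ (0,1), γ ∈ (0,1), h > 0, c ≥ 0, and set μ₀ := h²γ/√(h²γ² + c) > 0. Define F₀(t) := Φ̄(t)/((1−γ)Φ̄(t) + γΦ̄(t − μ₀)) − q. If t₀ ∈ ℝ satisfies F₀(t₀) = 0, then F₀ is differentiable at t₀ and F₀′(t₀) < 0. -/

import Mathlib

/-!
Negativity of the t-derivative of the baseline proxy FDP at its root (point-mass prior):
with `μ₀ := h²γ/√(h²γ² + c) > 0` and
`F₀(t) := Φ̄(t)/((1−γ)Φ̄(t) + γΦ̄(t − μ₀)) − q`, if `F₀(t₀) = 0` then `F₀` is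
differentiable at `t₀` with `F₀′(t₀) < 0`.
-/

open MeasureTheory ProbabilityTheory Filter

/-- The survival function `Φ̄` of the standard normal distribution. -/
noncomputable def stdNormSurvival (t : ℝ) : ℝ :=
  ((gaussianReal 0 1) (Set.Ici t)).toReal

/-- The baseline proxy FDP curve minus the level `q`. -/
noncomputable def baselineProxyF (γ q μ₀ : ℝ) (t : ℝ) : ℝ :=
  stdNormSurvival t /
    ((1 - γ) * stdNormSurvival t + γ * stdNormSurvival (t - μ₀)) - q

noncomputable def stdPhi (x : ℝ) : ℝ := gaussianPDFReal 0 1 x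

lemma stdPhi_eq (x : ℝ) : stdPhi x = (Real.sqrt (2 * Real.pi))⁻¹ * Real.exp (-(x ^ 2) / 2) := by
  simp [stdPhi, gaussianPDFReal]

lemma stdPhi_pos (x : ℝ) : 0 < stdPhi x := gaussianPDFReal_pos 0 1 x one_ne_zero

lemma stdPhi_integrable : Integrable stdPhi := integrable_gaussianPDFReal 0 1

lemma hasDerivAt_stdPhi (x : ℝ) : HasDerivAt stdPhi (-x * stdPhi x) x := by
  have h1 : HasDerivAt (fun y : ℝ => -(y ^ 2) / 2) (-x) x := by
    have := ((hasDerivAt_pow 2 x).neg).div_const 2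
    simpa using this.congr_deriv (by ring)
  have h2 : HasDerivAt (fun y : ℝ => Real.exp (-(y ^ 2) / 2))
      (Real.exp (-(x ^ 2) / 2) * (-x)) x := (Real.hasDerivAt_exp _).comp x h1
  have h3 := h2.const_mul (Real.sqrt (2 * Real.pi))⁻¹
  have : (fun y : ℝ => (Real.sqrt (2 * Real.pi))⁻¹ * Real.exp (-(y ^ 2) / 2)) = stdPhi := by
    funext y; rw [stdPhi_eq]
  rw [this] at h3
  refine h3.congr_deriv ?_
  rw [stdPhi_eq]; ring

lemma stdPhi_tendsto_atTop : Tendsto stdPhi atTop (nhds 0) := by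
  have h1 : Tendsto (fun x : ℝ => -(x ^ 2) / 2) atTop atBot := by
    have h0 : Tendsto (fun x : ℝ => x ^ 2) atTop atTop := tendsto_pow_atTop two_ne_zero
    exact (tendsto_neg_atBot_iff.mpr h0).atBot_div_const (by norm_num)
  have h2 : Tendsto (fun x : ℝ => Real.exp (-(x ^ 2) / 2)) atTop (nhds 0) :=
    Real.tendsto_exp_atBot.comp h1
  have := h2.const_mul (Real.sqrt (2 * Real.pi))⁻¹
  simp only [mul_zero] at this
  refine this.congr fun x => ?_
  rw [stdPhi_eq]

lemma integrableOn_x_stdPhi {t : ℝ} (ht : 0 < t) :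
    IntegrableOn (fun x => x * stdPhi x) (Set.Ioi t) := by
  refine integrableOn_Ioi_deriv_of_nonneg (g := fun x => -(stdPhi x)) (l := 0)
    ((hasDerivAt_stdPhi t).neg.continuousAt.continuousWithinAt) (fun x _ => ?_)
    (fun x hx => mul_nonneg (le_of_lt (ht.trans hx)) (stdPhi_pos x).le)
    (by simpa using stdPhi_tendsto_atTop.neg)
  · have := (hasDerivAt_stdPhi x).neg
    exact this.congr_deriv (by ring)

lemma integral_x_stdPhi {t : ℝ} (ht : 0 < t) :
    ∫ x in Set.Ioi t, x * stdPhi x = stdPhi t := by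
  have := integral_Ioi_of_hasDerivAt_of_nonneg (g := fun x => -(stdPhi x))
    (g' := fun x => x * stdPhi x) (l := 0)
    ((hasDerivAt_stdPhi t).neg.continuousAt.continuousWithinAt)
    (fun x _ => (hasDerivAt_stdPhi x).neg.congr_deriv (by ring))
    (fun x hx => mul_nonneg (le_of_lt (ht.trans hx)) (stdPhi_pos x).le)
    (by simpa using stdPhi_tendsto_atTop.neg)
  simpa using this

lemma stdNormSurvival_eq (t : ℝ) : stdNormSurvival t = ∫ x in Set.Ioi t, stdPhi x := by
  rw [stdNormSurvival, gaussianReal_apply_eq_integral 0 one_ne_zero,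
    ENNReal.toReal_ofReal (setIntegral_nonneg measurableSet_Ici
      fun x _ => gaussianPDFReal_nonneg 0 1 x),
    ← MeasureTheory.integral_Ici_eq_integral_Ioi]
  rfl

lemma stdNormSurvival_pos (t : ℝ) : 0 < stdNormSurvival t := by
  rw [stdNormSurvival_eq]
  rw [setIntegral_pos_iff_support_of_nonneg_ae
    (ae_of_all _ fun x => (stdPhi_pos x).le) stdPhi_integrable.integrableOn]
  have : Function.support stdPhi = Set.univ := by
    ext x; simp [Function.mem_support, (stdPhi_pos x).ne']
  rw [this, Set.univ_inter]
  simp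

lemma hasDerivAt_stdNormSurvival (t : ℝ) :
    HasDerivAt stdNormSurvival (-(stdPhi t)) t := by
  have hrepr : stdNormSurvival = fun u => stdNormSurvival 0 - ∫ x in (0:ℝ)..u, stdPhi x := by
    funext u
    have hcompl : ∀ v : ℝ, stdNormSurvival v = 1 - ∫ x in Set.Iic v, stdPhi x := by
      intro v
      have h := MeasureTheory.integral_add_compl (measurableSet_Iic (a := v))
        stdPhi_integrable
      rw [Set.compl_Iic] at h
      have h1 : ∫ x, stdPhi x = 1 := integral_gaussianPDFReal_eq_one 0 one_ne_zero
      rw [stdNormSurvival_eq]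
      linarith [h.trans h1]
    rw [hcompl u, hcompl 0, ← intervalIntegral.integral_Iic_sub_Iic
      stdPhi_integrable.integrableOn stdPhi_integrable.integrableOn]
    ring
  rw [hrepr]
  have h := intervalIntegral.integral_hasDerivAt_right (a := (0:ℝ)) (b := t)
    (stdPhi_integrable.intervalIntegrable)
    ((stronglyMeasurable_gaussianPDFReal 0 1).stronglyMeasurableAtFilter)
    (hasDerivAt_stdPhi t).continuousAt
  exact ((hasDerivAt_const t (stdNormSurvival 0)).sub h).congr_deriv (by simp)

lemma mul_stdNormSurvival_lt (t : ℝ) : t * stdNormSurvival t < stdPhi t := by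
  rcases le_or_gt t 0 with ht | ht
  · have := stdNormSurvival_pos t
    nlinarith [stdPhi_pos t]
  · have hxphi : IntegrableOn (fun x => x * stdPhi x) (Set.Ioi t) := integrableOn_x_stdPhi ht
    have htphi : IntegrableOn (fun x => t * stdPhi x) (Set.Ioi t) :=
      (stdPhi_integrable.integrableOn).const_mul t
    have hint : IntegrableOn (fun x => x * stdPhi x - t * stdPhi x) (Set.Ioi t) :=
      hxphi.sub htphi
    have hpos : 0 < ∫ x in Set.Ioi t, (x * stdPhi x - t * stdPhi x) := by
      rw [setIntegral_pos_iff_support_of_nonneg_ae ?_ hint]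
      · have hsub : Set.Ioi t ⊆
            Function.support (fun x => x * stdPhi x - t * stdPhi x) ∩ Set.Ioi t := by
          intro x hx
          refine ⟨?_, hx⟩
          have hlt : 0 < x * stdPhi x - t * stdPhi x := by
            have := stdPhi_pos x
            nlinarith [Set.mem_Ioi.mp hx]
          simp [Function.mem_support, hlt.ne']
        exact lt_of_lt_of_le (by simp) (measure_mono hsub)
      · filter_upwards [ae_restrict_mem measurableSet_Ioi] with x hx
        have := stdPhi_pos x
        simp only [Pi.zero_apply]
        nlinarith [Set.mem_Ioi.mp hx]
    rw [integral_sub hxphi htphi, integral_x_stdPhi ht] at hpos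
    have : ∫ x in Set.Ioi t, t * stdPhi x = t * stdNormSurvival t := by
      rw [integral_const_mul, stdNormSurvival_eq]
    linarith [this ▸ hpos]

lemma millsRatio_strictAnti :
    StrictAnti (fun t => stdNormSurvival t / stdPhi t) := by
  apply strictAnti_of_deriv_neg
  intro x
  have hd : HasDerivAt (fun t => stdNormSurvival t / stdPhi t)
      ((-(stdPhi x) * stdPhi x - stdNormSurvival x * (-x * stdPhi x)) / (stdPhi x) ^ 2) x :=
    (hasDerivAt_stdNormSurvival x).div (hasDerivAt_stdPhi x) (stdPhi_pos x).ne'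
  rw [hd.deriv]
  apply div_neg_of_neg_of_pos
  · have h1 := mul_stdNormSurvival_lt x
    have h2 := stdPhi_pos x
    nlinarith
  · exact pow_pos (stdPhi_pos x) 2

theorem baseline_proxy_FDP_deriv_neg_at_root
    (q γ h c : ℝ) (hq : q ∈ Set.Ioo (0 : ℝ) 1) (hγ : γ ∈ Set.Ioo (0 : ℝ) 1)
    (hh : 0 < h) (hc : 0 ≤ c)
    (t₀ : ℝ)
    (hroot : baselineProxyF γ q (h ^ 2 * γ / Real.sqrt (h ^ 2 * γ ^ 2 + c)) t₀ = 0) :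
    DifferentiableAt ℝ (baselineProxyF γ q (h ^ 2 * γ / Real.sqrt (h ^ 2 * γ ^ 2 + c))) t₀ ∧
      deriv (baselineProxyF γ q (h ^ 2 * γ / Real.sqrt (h ^ 2 * γ ^ 2 + c))) t₀ < 0 := by
  obtain ⟨hq0, hq1⟩ := hq
  obtain ⟨hγ0, hγ1⟩ := hγ
  set μ₀ := h ^ 2 * γ / Real.sqrt (h ^ 2 * γ ^ 2 + c) with hμdef
  have hμpos : 0 < μ₀ := by
    apply div_pos (by positivity)
    exact Real.sqrt_pos.mpr (by positivity)
  set D : ℝ → ℝ := fun t => (1 - γ) * stdNormSurvival t + γ * stdNormSurvival (t - μ₀)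
    with hDdef
  have hSt := stdNormSurvival_pos t₀
  have hSs := stdNormSurvival_pos (t₀ - μ₀)
  have hγ1' : (0:ℝ) < 1 - γ := by linarith
  have hD0 : 0 < D t₀ := by
    simp only [hDdef]
    positivity
  have hDd : HasDerivAt D
      ((1 - γ) * (-(stdPhi t₀)) + γ * (-(stdPhi (t₀ - μ₀)))) t₀ := by
    have h1 := (hasDerivAt_stdNormSurvival t₀).const_mul (1 - γ)
    have h2 := ((hasDerivAt_stdNormSurvival (t₀ - μ₀)).comp t₀
      ((hasDerivAt_id t₀).sub_const μ₀)).const_mul γ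
    exact (h1.add h2).congr_deriv (by ring)
  have hF : HasDerivAt (baselineProxyF γ q μ₀)
      (((-(stdPhi t₀)) * D t₀ - stdNormSurvival t₀ *
        ((1 - γ) * (-(stdPhi t₀)) + γ * (-(stdPhi (t₀ - μ₀))))) / (D t₀) ^ 2) t₀ :=
    ((hasDerivAt_stdNormSurvival t₀).div hDd hD0.ne').sub_const q
  refine ⟨hF.differentiableAt, ?_⟩
  rw [hF.deriv]
  apply div_neg_of_neg_of_pos _ (pow_pos hD0 2)
  have hmills := millsRatio_strictAnti (show t₀ - μ₀ < t₀ from sub_lt_self _ hμpos)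
  simp only at hmills
  have hcross : stdNormSurvival t₀ * stdPhi (t₀ - μ₀) <
      stdNormSurvival (t₀ - μ₀) * stdPhi t₀ := by
    rw [div_lt_div_iff₀ (stdPhi_pos t₀) (stdPhi_pos (t₀ - μ₀))] at hmills
    linarith
  have hexp : (-(stdPhi t₀)) * D t₀ - stdNormSurvival t₀ *
      ((1 - γ) * (-(stdPhi t₀)) + γ * (-(stdPhi (t₀ - μ₀)))) =
      γ * (stdNormSurvival t₀ * stdPhi (t₀ - μ₀) -
        stdNormSurvival (t₀ - μ₀) * stdPhi t₀) := by
    simp only [hDdef]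
    ring
  rw [hexp]
  exact mul_neg_of_pos_of_neg hγ0 (by linarith)
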